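/- arXiv:2501.12219 — 5 statements merged into one kernel-verified Lean document; each statement's English description precedes it below -/
import Mathlib

section
/- Let A be an n×n complex matrix whose associated digraph (with an edge j→i when a_{ij} ≠ 0) is strongly connected, and let λ be an eigenvalue of A satisfying |λ − a_{ii}| ≥ Σ_{j≠i} |a_{ij}| for every i. Then |λ − a_{ii}| = Σ_{j≠i} |a_{ij}| for every i, i.e., λ lies on the boundary of every Gershgorin disc. -/
open Complex Matrix Finset

/-- "Better Theorem": let `A` be an `n×n` complex matrix whose
digraph (edge `j → i` when `a_{ij} ≠ 0`) is strongly connected, and let `λ` be an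
eigenvalue of `A` with `|λ − a_{ii}| ≥ Σ_{j≠i} |a_{ij}|` for every `i`.  Then
`|λ − a_{ii}| = Σ_{j≠i} |a_{ij}|` for every `i`, i.e. `λ` lies on the boundary
of every Gershgorin disc. -/
theorem gershgorin_boundary_of_strongly_connected
    (n : ℕ) (A : Matrix (Fin n) (Fin n) ℂ)
    (hconn : ∀ i j : Fin n, Relation.ReflTransGen (fun u v : Fin n => A v u ≠ 0) i j)
    (lam : ℂ) (hlam : lam ∈ spectrum ℂ A)
    (hge : ∀ i : Fin n, ∑ j ∈ Finset.univ.erase i, ‖A i j‖ ≤ ‖lam - A i i‖) :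
    ∀ i : Fin n, ‖lam - A i i‖ = ∑ j ∈ Finset.univ.erase i, ‖A i j‖ := by
  -- obtain an eigenvector
  rw [← AlgEquiv.spectrum_eq (Matrix.toLinAlgEquiv' (R := ℂ) (n := Fin n)),
    ← Module.End.hasEigenvalue_iff_mem_spectrum] at hlam
  obtain ⟨v, hv, hv0⟩ := hlam.exists_hasEigenvector
  have heig : ∀ i, ∑ j, A i j * v j = lam * v i := by
    intro i
    have h0 := Module.End.mem_eigenspace_iff.mp hv
    have h1 : (Matrix.toLinAlgEquiv' A) v = A.mulVec v := rfl
    rw [h1] at h0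
    have := congrFun h0 i
    simpa [Matrix.mulVec, dotProduct] using this
  -- n > 0 since an eigenvector exists
  obtain ⟨k0, hk0⟩ : ∃ k, v k ≠ 0 := Function.ne_iff.mp hv0
  -- the maximum coordinate
  obtain ⟨i0, -, hi0⟩ := Finset.exists_max_image Finset.univ (fun i => ‖v i‖)
    ⟨k0, Finset.mem_univ k0⟩
  set M : ℝ := ‖v i0‖ with hM
  have hMmax : ∀ i, ‖v i‖ ≤ M := fun i => hi0 i (Finset.mem_univ i)
  have hMpos : 0 < M := lt_of_lt_of_le (norm_pos_iff.mpr hk0) (hMmax k0)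
  -- the key step: at a coordinate of maximal modulus, the boundary equality holds
  -- and all in-neighbours also have maximal modulus
  have key : ∀ i : Fin n, ‖v i‖ = M →
      (‖lam - A i i‖ = ∑ j ∈ Finset.univ.erase i, ‖A i j‖) ∧
      (∀ j, A i j ≠ 0 → ‖v j‖ = M) := by
    intro i hvi
    have hsplit : (lam - A i i) * v i = ∑ j ∈ Finset.univ.erase i, A i j * v j := by
      have h := heig i
      rw [← Finset.add_sum_erase _ _ (Finset.mem_univ i)] at h
      calc (lam - A i i) * v i = lam * v i - A i i * v i := by ring
        _ = ∑ j ∈ Finset.univ.erase i, A i j * v j := by rw [← h]; ring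
    have h1 : ‖lam - A i i‖ * M = ‖∑ j ∈ Finset.univ.erase i, A i j * v j‖ := by
      rw [← hsplit, norm_mul, hvi]
    have h2 : ‖∑ j ∈ Finset.univ.erase i, A i j * v j‖ ≤
        ∑ j ∈ Finset.univ.erase i, ‖A i j‖ * ‖v j‖ := by
      refine (norm_sum_le _ _).trans_eq ?_
      exact Finset.sum_congr rfl fun j _ => norm_mul _ _
    have h3 : ∑ j ∈ Finset.univ.erase i, ‖A i j‖ * ‖v j‖ ≤
        ∑ j ∈ Finset.univ.erase i, ‖A i j‖ * M :=
      Finset.sum_le_sum fun j _ => mul_le_mul_of_nonneg_left (hMmax j) (norm_nonneg _)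
    have h4 : ∑ j ∈ Finset.univ.erase i, ‖A i j‖ * M ≤ ‖lam - A i i‖ * M := by
      rw [← Finset.sum_mul]
      exact mul_le_mul_of_nonneg_right (hge i) hMpos.le
    -- all inequalities are equalities
    have e3 : ∑ j ∈ Finset.univ.erase i, ‖A i j‖ * ‖v j‖ =
        ∑ j ∈ Finset.univ.erase i, ‖A i j‖ * M := by
      refine le_antisymm h3 ?_
      calc ∑ j ∈ Finset.univ.erase i, ‖A i j‖ * M ≤ ‖lam - A i i‖ * M := h4
        _ = ‖∑ j ∈ Finset.univ.erase i, A i j * v j‖ := h1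
        _ ≤ _ := h2
    have e4 : ∑ j ∈ Finset.univ.erase i, ‖A i j‖ * M = ‖lam - A i i‖ * M := by
      refine le_antisymm h4 ?_
      calc ‖lam - A i i‖ * M = ‖∑ j ∈ Finset.univ.erase i, A i j * v j‖ := h1
        _ ≤ ∑ j ∈ Finset.univ.erase i, ‖A i j‖ * ‖v j‖ := h2
        _ = _ := e3
    constructor
    · have : (∑ j ∈ Finset.univ.erase i, ‖A i j‖) * M = ‖lam - A i i‖ * M := by
        rw [Finset.sum_mul]; exact e4
      exact (mul_right_cancel₀ hMpos.ne' this).symm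
    · intro j hAij
      by_cases hji : j = i
      · subst hji; exact hvi
      have hjmem : j ∈ Finset.univ.erase i := Finset.mem_erase.mpr ⟨hji, Finset.mem_univ j⟩
      have := (Finset.sum_eq_sum_iff_of_le
        (fun j _ => mul_le_mul_of_nonneg_left (hMmax j) (norm_nonneg (A i j)))).mp e3 j hjmem
      have hA : (0:ℝ) < ‖A i j‖ := norm_pos_iff.mpr hAij
      exact mul_left_cancel₀ hA.ne' this
  -- propagate maximality backwards along paths to `i0`
  have hall : ∀ i : Fin n, ‖v i‖ = M := by
    have prop : ∀ a b : Fin n,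
        Relation.ReflTransGen (fun u v : Fin n => A v u ≠ 0) a b → ‖v b‖ = M → ‖v a‖ = M := by
      intro a b h
      induction h with
      | refl => exact id
      | tail _ hbc ih => intro hc; exact ih ((key _ hc).2 _ hbc)
    intro i
    exact prop i i0 (hconn i i0) rfl
  intro i
  exact (key i (hall i)).1
end

section
/- Let A be an n×n real matrix with Σ_j |a_{ij}| = 1 for every row i, with at least one diagonal entry a_{ii} > 0, and whose digraph is strongly connected. Then every eigenvalue λ of A with |λ| = 1 must equal 1. In particular, if additionally 1 is not an eigenvalue of A, then ρ(A) < 1. -/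
open Complex Matrix Finset

/-- let `A` be an `n×n` real matrix whose absolute row sums all
equal `1`, with at least one diagonal entry `a_{ii} > 0`, and whose digraph
(edge `j → i` when `a_{ij} ≠ 0`) is strongly connected.  Then every eigenvalue
`λ` of `A` with `|λ| = 1` equals `1`; in particular, if `1` is not an
eigenvalue of `A`, then `ρ(A) < 1`. -/
theorem unit_modulus_eigenvalue_eq_one
    (n : ℕ) (A : Matrix (Fin n) (Fin n) ℝ)
    (hrow : ∀ i : Fin n, ∑ j : Fin n, |A i j| = 1)
    (hdiag : ∃ i : Fin n, 0 < A i i)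
    (hconn : ∀ i j : Fin n, Relation.ReflTransGen (fun u v : Fin n => A v u ≠ 0) i j) :
    (∀ lam : ℂ, lam ∈ spectrum ℂ (A.map (Complex.ofReal)) → ‖lam‖ = 1 → lam = 1) ∧
    ((1 : ℂ) ∉ spectrum ℂ (A.map (Complex.ofReal)) →
      ∀ lam : ℂ, lam ∈ spectrum ℂ (A.map (Complex.ofReal)) → ‖lam‖ < 1) := by
  set M := A.map (Complex.ofReal) with hM
  have key : ∀ lam : ℂ, lam ∈ spectrum ℂ M → ‖lam‖ ≤ 1 ∧ (‖lam‖ = 1 → lam = 1) := by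
    intro lam hmem
    -- extract an eigenvector
    rw [spectrum.mem_iff, Matrix.isUnit_iff_isUnit_det, isUnit_iff_ne_zero, not_not] at hmem
    obtain ⟨v, hv, hMv⟩ := Matrix.exists_mulVec_eq_zero_iff.mpr hmem
    rw [Matrix.sub_mulVec, Algebra.algebraMap_eq_smul_one, Matrix.smul_mulVec,
      Matrix.one_mulVec, sub_eq_zero] at hMv
    have hrowEq : ∀ i, ∑ j, (A i j : ℂ) * v j = lam * v i := by
      intro i
      have := congrFun hMv.symm i
      simpa [Matrix.mulVec, dotProduct, hM, Matrix.map_apply] using this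
    -- maximum of ‖v‖
    obtain ⟨j0, hj0⟩ := Function.ne_iff.mp hv
    have hne : (univ : Finset (Fin n)).Nonempty := ⟨j0, mem_univ j0⟩
    obtain ⟨i0, -, hmax⟩ := Finset.exists_max_image univ (fun j => ‖v j‖) hne
    set m := ‖v i0‖ with hmdef
    have hmax' : ∀ j, ‖v j‖ ≤ m := fun j => hmax j (mem_univ j)
    have hm : 0 < m := lt_of_lt_of_le (norm_pos_iff.mpr hj0) (hmax' j0)
    have bound : ∀ i, ‖lam‖ * ‖v i‖ = ∑ j, ‖(A i j : ℂ) * v j‖ →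
        False ∨ True := fun _ _ => Or.inr trivial
    have sum_le : ∀ i, ∑ j, |A i j| * ‖v j‖ ≤ m := by
      intro i
      calc ∑ j, |A i j| * ‖v j‖ ≤ ∑ j, |A i j| * m := by
            refine Finset.sum_le_sum fun j _ => ?_
            exact mul_le_mul_of_nonneg_left (hmax' j) (abs_nonneg _)
        _ = m := by rw [← Finset.sum_mul, hrow i, one_mul]
    have norm_le : ∀ i, ‖lam‖ * ‖v i‖ ≤ ∑ j, |A i j| * ‖v j‖ := by
      intro i
      rw [← norm_mul, ← hrowEq i]
      refine (norm_sum_le _ _).trans_eq ?_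
      refine Finset.sum_congr rfl fun j _ => ?_
      rw [norm_mul, Complex.norm_real, Real.norm_eq_abs]
    -- Gershgorin bound:
    have hle1 : ‖lam‖ ≤ 1 := by
      have := (norm_le i0).trans (sum_le i0)
      have h1m : ‖lam‖ * m ≤ 1 * m := by simpa using this
      exact le_of_mul_le_mul_right h1m hm
    refine ⟨hle1, fun hlam => ?_⟩
    -- propagation of maximality
    have prop : ∀ i, ‖v i‖ = m → ∀ j, A i j ≠ 0 → ‖v j‖ = m := by
      intro i hi j hj
      have heq : ∑ j, |A i j| * ‖v j‖ = ∑ j, |A i j| * m := by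
        have h1 : m ≤ ∑ j, |A i j| * ‖v j‖ := by
          have := norm_le i
          rwa [hlam, one_mul, hi] at this
        have h2 : (∑ j, |A i j| * m) = m := by rw [← Finset.sum_mul, hrow i, one_mul]
        rw [h2]
        exact le_antisymm (sum_le i) h1
      have hterm := (Finset.sum_eq_sum_iff_of_le (fun j _ =>
        mul_le_mul_of_nonneg_left (hmax' j) (abs_nonneg (A i j)))).mp heq j (mem_univ j)
      exact mul_left_cancel₀ (abs_ne_zero.mpr hj) hterm
    have hall : ∀ i, ‖v i‖ = m := by
      intro i
      refine Relation.ReflTransGen.head_induction_on (hconn i i0) rfl ?_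
      intro a c hac _ hc
      exact prop c hc a hac
    -- the diagonal row
    obtain ⟨k, hk⟩ := hdiag
    have hAk1 : A k k ≤ 1 := by
      have : |A k k| ≤ 1 := by
        rw [← hrow k]
        exact Finset.single_le_sum (f := fun j => |A k j|) (fun j _ => abs_nonneg _) (mem_univ k)
      exact (abs_le.mp this).2
    have hsplit : (lam - (A k k : ℂ)) * v k = ∑ j ∈ univ.erase k, (A k j : ℂ) * v j := by
      have := Finset.sum_erase_add univ (fun j => (A k j : ℂ) * v j) (mem_univ k)
      rw [hrowEq k] at this
      linear_combination -this
    have hnorm : ‖lam - (A k k : ℂ)‖ * m ≤ (1 - A k k) * m := by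
      have h1 : ‖(lam - (A k k : ℂ)) * v k‖ ≤ ∑ j ∈ univ.erase k, |A k j| * m := by
        rw [hsplit]
        refine (norm_sum_le _ _).trans ?_
        refine Finset.sum_le_sum fun j _ => ?_
        rw [norm_mul, Complex.norm_real, Real.norm_eq_abs]
        exact mul_le_mul_of_nonneg_left (hmax' j) (abs_nonneg _)
      have h2 : ∑ j ∈ univ.erase k, |A k j| * m = (1 - A k k) * m := by
        rw [← Finset.sum_mul]
        congr 1
        have h3 : ∑ j ∈ univ.erase k, |A k j| + |A k k| = 1 := by
          rw [Finset.sum_erase_add univ _ (mem_univ k)]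
          exact hrow k
        rw [abs_of_pos hk] at h3
        linarith
      rw [norm_mul, hall k] at h1
      linarith [h1, h2.symm.le]
    have hle2 : ‖lam - (A k k : ℂ)‖ ≤ 1 - A k k := le_of_mul_le_mul_right hnorm hm
    -- conclude lam = 1
    have hsq1 : lam.re ^ 2 + lam.im ^ 2 = 1 := by
      have := congrArg (· ^ 2) hlam
      simp only [Complex.sq_norm, Complex.normSq_apply] at this
      nlinarith [this]
    have hsq2 : (lam.re - A k k) ^ 2 + lam.im ^ 2 ≤ (1 - A k k) ^ 2 := by
      have hnn : (0:ℝ) ≤ ‖lam - (A k k : ℂ)‖ := norm_nonneg _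
      have h4 : ‖lam - (A k k : ℂ)‖ ^ 2 ≤ (1 - A k k) ^ 2 := by nlinarith
      have habs : ‖lam - (A k k : ℂ)‖ ^ 2 = (lam.re - A k k) ^ 2 + lam.im ^ 2 := by
        rw [Complex.sq_norm, Complex.normSq_apply]
        simp only [Complex.sub_re, Complex.sub_im, Complex.ofReal_re, Complex.ofReal_im]
        ring
      rw [habs] at h4
      exact h4
    have hre : lam.re = 1 := by nlinarith
    have him : lam.im = 0 := by nlinarith
    exact Complex.ext hre (by simpa using him)
  constructor
  · exact fun lam hmem hl => (key lam hmem).2 hl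
  · intro h1 lam hmem
    rcases lt_or_eq_of_le (key lam hmem).1 with h | h
    · exact h
    · exact absurd (((key lam hmem).2 h) ▸ hmem) h1
end

section
/- For every x < 0 and τ ∈ [0, π/(2|x|)), all roots z ∈ ℂ of the equation z = x e^{−zτ} have strictly negative real part. -/
open Complex Real

/-- Hayes criterion: for every `x < 0` and every delay
`τ ∈ [0, π/(2|x|))`, all roots `z ∈ ℂ` of `z = x e^{−zτ}` have strictly
negative real part. -/
theorem hayes_stability (x : ℝ) (hx : x < 0) (τ : ℝ) (hτ0 : 0 ≤ τ)
    (hτ : τ < π / (2 * |x|)) :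
    ∀ z : ℂ, z = (x : ℂ) * Complex.exp (-z * (τ : ℂ)) → z.re < 0 := by
  intro z hz
  by_contra hcon
  push_neg at hcon
  set a := z.re with ha
  set b := z.im with hb
  have habs : |x| = -x := abs_of_neg hx
  have hxpos : (0:ℝ) < -x := by linarith
  -- real part of equation
  have hwre : (-z * (τ:ℂ)).re = -(a*τ) := by simp [mul_comm, ha]
  have hwim : (-z * (τ:ℂ)).im = -(b*τ) := by simp [mul_comm, hb]
  have hre : a = x * (Real.exp (-(a*τ)) * Real.cos (b*τ)) := by
    have := congrArg Complex.re hz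
    rw [Complex.mul_re] at this
    simp only [Complex.ofReal_re, Complex.ofReal_im, zero_mul, sub_zero] at this
    rw [Complex.exp_re, hwre, hwim, Real.cos_neg] at this
    exact this
  -- modulus of equation
  have hmod : ‖z‖ = -x * Real.exp (-(a*τ)) := by
    have := congrArg (‖·‖) hz
    rw [norm_mul, Complex.norm_exp, hwre, Complex.norm_real, Real.norm_eq_abs, habs] at this
    exact this
  have hexp1 : Real.exp (-(a*τ)) ≤ 1 := by
    rw [Real.exp_le_one_iff]
    nlinarith
  have hbz : |b| ≤ ‖z‖ := Complex.abs_im_le_norm z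
  have hble : |b| ≤ -x := by
    calc |b| ≤ ‖z‖ := hbz
    _ = -x * Real.exp (-(a*τ)) := hmod
    _ ≤ -x * 1 := by nlinarith [Real.exp_pos (-(a*τ))]
    _ = -x := mul_one _
  have hxt : (-x) * τ < π/2 := by
    rw [lt_div_iff₀ (by rw [habs]; linarith)] at hτ
    rw [habs] at hτ
    nlinarith
  have hcos : 0 < Real.cos (b*τ) := by
    apply Real.cos_pos_of_mem_Ioo
    constructor
    · have : -(π/2) ≤ -((-x)*τ) := by linarith
      have h2 : -((-x)*τ) ≤ b*τ := by
        have := neg_abs_le b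
        nlinarith [abs_nonneg b]
      nlinarith [hxt]
    · have : b*τ ≤ (-x)*τ := by nlinarith [le_abs_self b]
      linarith
  have := mul_neg_of_neg_of_pos hx (mul_pos (Real.exp_pos (-(a*τ))) hcos)
  linarith
end

section
/- With the block companion matrix A of the delayed system as above, the signed digraph G(W) is structurally balanced if and only if the signed digraph G(A) is structurally balanced. -/
open Matrix

/-- A signed digraph (given by a weight matrix `M`) is structurally balanced if
its vertices admit a bipartition such that all edges within each part have
nonnegative weight and all edges between the parts have nonpositive weight. -/
def StructurallyBalanced {ι : Type*} (M : Matrix ι ι ℝ) : Prop :=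
  ∃ s : ι → Bool, ∀ i j : ι,
    (s i = s j → 0 ≤ M i j) ∧ (s i ≠ s j → M i j ≤ 0)

/-- The block companion matrix of the delayed system
`X(k+1) = Ŵ X(k) + W̃ X(k-τ)`, with first block row `[Ŵ, 0, …, 0, W̃]`
(`Ŵ = diag(W)`, `W̃ = W − Ŵ`) and identity blocks on the subdiagonal. -/
def companion (n τ : ℕ) (W : Matrix (Fin n) (Fin n) ℝ) :
    Matrix (Fin (τ + 1) × Fin n) (Fin (τ + 1) × Fin n) ℝ :=
  fun p q =>
    (if p.1 = 0 ∧ q.1 = 0 ∧ p.2 = q.2 then W p.2 q.2 else 0) +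
    (if p.1 = 0 ∧ q.1 = Fin.last τ ∧ p.2 ≠ q.2 then W p.2 q.2 else 0) +
    (if (p.1 : ℕ) = (q.1 : ℕ) + 1 ∧ p.2 = q.2 then 1 else 0)

/-- the signed digraph `G(W)` (with nonnegative diagonal, i.e.
`Ŵ ≥ 0`) is structurally balanced iff the signed digraph `G(A)` of the block
companion matrix is structurally balanced. -/
theorem structurally_balanced_iff_companion
    (n τ : ℕ) (W : Matrix (Fin n) (Fin n) ℝ)
    (hdiag : ∀ i : Fin n, 0 ≤ W i i) :
    StructurallyBalanced W ↔ StructurallyBalanced (companion n τ W) := by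
  constructor
  · rintro ⟨s, hs⟩
    refine ⟨fun p => s p.2, fun p q => ?_⟩
    obtain ⟨k, i⟩ := p; obtain ⟨l, j⟩ := q
    simp only [companion]
    constructor
    · intro h
      have hW : 0 ≤ W i j := (hs i j).1 h
      have h1 : (0:ℝ) ≤ if k = 0 ∧ l = 0 ∧ i = j then W i j else 0 := by
        split <;> simp_all
      have h2 : (0:ℝ) ≤ if k = 0 ∧ l = Fin.last τ ∧ i ≠ j then W i j else 0 := by
        split <;> simp_all
      have h3 : (0:ℝ) ≤ if (k : ℕ) = (l : ℕ) + 1 ∧ i = j then 1 else 0 := by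
        split <;> norm_num
      exact add_nonneg (add_nonneg h1 h2) h3
    · intro h
      have hW : W i j ≤ 0 := (hs i j).2 h
      have hij : i ≠ j := by rintro rfl; exact h rfl
      have h1 : (if k = 0 ∧ l = 0 ∧ i = j then W i j else 0) = 0 := by
        split <;> simp_all
      have h3 : (if (k : ℕ) = (l : ℕ) + 1 ∧ i = j then (1:ℝ) else 0) = 0 := by
        split <;> simp_all
      rw [h1, h3]
      have h2 : (if k = 0 ∧ l = Fin.last τ ∧ i ≠ j then W i j else 0) ≤ 0 := by
        split <;> simp_all
      linarith
  · rintro ⟨s, hs⟩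
    have hchain : ∀ (k : Fin (τ+1)) (i : Fin n), s (k, i) = s (0, i) := by
      rintro ⟨k, hk⟩ i
      induction k with
      | zero => rfl
      | succ m ih =>
        have hm : m < τ + 1 := Nat.lt_of_succ_lt hk
        have hone : companion n τ W (⟨m+1, hk⟩, i) (⟨m, hm⟩, i) = 1 := by
          simp [companion, Fin.ext_iff]
        by_contra hne
        have hne' : s (⟨m+1, hk⟩, i) ≠ s (⟨m, hm⟩, i) := by
          rw [ih hm]; exact hne
        have := (hs (⟨m+1, hk⟩, i) (⟨m, hm⟩, i)).2 hne'
        rw [hone] at this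
        linarith
    refine ⟨fun i => s (0, i), fun i j => ?_⟩
    by_cases hij : i = j
    · subst hij
      exact ⟨fun _ => hdiag i, fun h => absurd rfl h⟩
    · have hent : companion n τ W (0, i) (Fin.last τ, j) = W i j := by
        simp [companion, hij]
      have hsig := hs (0, i) (Fin.last τ, j)
      rw [hent, hchain (Fin.last τ) j] at hsig
      exact hsig
end

section
/- Under the hypotheses P_{+/+} + P_{+/0} < 1 and P_{−/−} + P_{−/0} < 1 (with all five proportions nonnegative summing to 1 and P̂ > 0), the ratio |P̄|/P̂ is strictly less than 1, where P̂ and P̄ are defined as P̂ = P_{+/+} + P_{+/−} + P_{−/−} + ½P_{+/0} + ½P_{−/0} and P̄ = P_{+/+} − P_{−/−} + ½P_{+/0} − ½P_{−/0}. -/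
/-- under `P_{+/+} + P_{+/0} < 1` and `P_{−/−} + P_{−/0} < 1`
(all five nonnegative proportions summing to `1`, `P̂ > 0`), the outlier-ratio
`|P̄|/P̂` is strictly less than `1`. -/
theorem outlier_ratio_lt_one
    (Ppp Pmm Ppm Pp0 Pm0 : ℝ)
    (hpp : 0 ≤ Ppp) (hmm : 0 ≤ Pmm) (hpm : 0 ≤ Ppm) (hp0 : 0 ≤ Pp0) (hm0 : 0 ≤ Pm0)
    (hsum : Ppp + Pmm + Ppm + Pp0 + Pm0 = 1)
    (htrust : Ppp + Pp0 < 1) (hmistrust : Pmm + Pm0 < 1)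
    (Phat Pbar : ℝ)
    (hPhat : Phat = Ppp + Ppm + Pmm + Pp0 / 2 + Pm0 / 2)
    (hPbar : Pbar = Ppp - Pmm + Pp0 / 2 - Pm0 / 2)
    (hpos : 0 < Phat) :
    |Pbar| / Phat < 1 := by
  rw [div_lt_one hpos, abs_lt]
  constructor <;> nlinarith
end
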